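/- Let f₀ : (0, R] → ℝ be continuous, nonnegative, with x ↦ f₀(|x|) subharmonic on the punctured ball {0 < |x| < ∞} of ℝ² (after extending by the harmonic profile), f₀(R) = 1, and f₀(r) = ln(r/a)/ln(R/a) for r ≥ R₀ where 0 < a < R₀ < R. Then f₀(r) ≥ ln(r/a)/ln(R/a) for all r ∈ (0, R] (interpreting the right side as its possibly negative value for r < a). -/

import Mathlib

open Real

lemma log_circle_mean (c ρ : ℝ) (hρ0 : 0 < ρ) (hρc : ρ < c) :
    ∫ θ in (0:ℝ)..(2*π),
      Real.log ‖(c:ℂ) + ρ * Complex.exp (θ * Complex.I)‖ = 2 * π * Real.log c := by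
  have hc0 : 0 < c := hρ0.trans hρc
  have hball : ∀ z ∈ Metric.closedBall (c:ℂ) ρ, z ∈ Complex.slitPlane := by
    intro z hz
    refine Complex.mem_slitPlane_iff.2 (Or.inl ?_)
    have h1 : |(z - c).re| ≤ ‖z - c‖ := Complex.abs_re_le_norm _
    have h2 : ‖z - c‖ ≤ ρ := by
      rwa [Metric.mem_closedBall, Complex.dist_eq] at hz
    have h3 : (z - c).re = z.re - c := by simp
    have h4 := abs_le.mp (h1.trans h2)
    rw [h3] at h4
    linarith [h4.1]
  have hdiff : DiffContOnCl ℂ Complex.log (Metric.ball (c:ℂ) ρ) := by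
    constructor
    · intro z hz
      exact (Complex.differentiableAt_log
        (hball z (Metric.ball_subset_closedBall hz))).differentiableWithinAt
    · intro z hz
      exact (continuousAt_clog
        (hball z (Metric.closure_ball_subset_closedBall hz))).continuousWithinAt
  have key := hdiff.circleIntegral_sub_inv_smul (Metric.mem_ball_self hρ0) (w := (c:ℂ))
  rw [circleIntegral] at key
  have hint : ∀ θ : ℝ, deriv (circleMap (c:ℂ) ρ) θ • ((circleMap (c:ℂ) ρ θ - c)⁻¹ •
      Complex.log (circleMap (c:ℂ) ρ θ)) = Complex.I * Complex.log (circleMap (c:ℂ) ρ θ) := by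
    intro θ
    have hne : circleMap 0 ρ θ ≠ 0 := circleMap_ne_center hρ0.ne'
    rw [deriv_circleMap, circleMap_sub_center, smul_eq_mul, smul_eq_mul]
    field_simp
  simp only [hint] at key
  rw [intervalIntegral.integral_const_mul] at key
  have key2 : ∫ θ in (0:ℝ)..(2*π), Complex.log (circleMap (c:ℂ) ρ θ)
      = 2 * π * Complex.log c := by
    refine mul_left_cancel₀ Complex.I_ne_zero ?_
    rw [key, smul_eq_mul]; push_cast; ring
  have hcont : Continuous fun θ : ℝ => Complex.log (circleMap (c:ℂ) ρ θ) := by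
    refine continuous_iff_continuousAt.2 fun θ => ?_
    exact (continuousAt_clog
      (hball _ (circleMap_mem_closedBall _ hρ0.le θ))).comp (continuous_circleMap _ _).continuousAt
  have hre := Complex.reCLM.intervalIntegral_comp_comm
    (hcont.intervalIntegrable (μ := MeasureTheory.volume) (0:ℝ) (2*π))
  have heq : (fun θ : ℝ => Real.log ‖(c:ℂ) + ρ * Complex.exp (θ * Complex.I)‖)
      = fun θ : ℝ => Complex.reCLM (Complex.log (circleMap (c:ℂ) ρ θ)) := by
    funext θ
    simp [circleMap, Complex.log_re]
  rw [heq, hre, key2]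
  simp [Complex.log_re, Complex.norm_real, abs_of_pos hc0]


/-- Part A of Lemma A.2 of Lieb–Yngvason: a nonnegative radial profile `f₀` which is
subharmonic as a function on the punctured plane (subharmonicity encoded by the
circle sub-mean value property), agrees with the harmonic profile
`ln(r/a)/ln(R/a)` for `r ≥ R₀`, dominates that harmonic profile on all of `(0, R]`. -/
theorem scattering_solution_dominates_asymptotic (a R₀ R : ℝ)
    (ha : 0 < a) (haR₀ : a < R₀) (hR₀R : R₀ < R)
    (f₀ : ℝ → ℝ)
    (hcont : ContinuousOn f₀ (Set.Ioi 0))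
    (hnonneg : ∀ r ∈ Set.Ioc (0 : ℝ) R, 0 ≤ f₀ r)
    (hbdry : f₀ R = 1)
    (hharm : ∀ r : ℝ, R₀ ≤ r → f₀ r = Real.log (r / a) / Real.log (R / a))
    (hsub : ∀ z : ℂ, z ≠ 0 → ∀ ρ : ℝ, 0 < ρ → ρ < ‖z‖ →
      f₀ ‖z‖ ≤ (1 / (2 * π)) *
        ∫ θ in (0 : ℝ)..(2 * π), f₀ ‖z + ρ * Complex.exp (θ * Complex.I)‖) :
    ∀ r ∈ Set.Ioc (0 : ℝ) R, Real.log (r / a) / Real.log (R / a) ≤ f₀ r := by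
  intro s hs
  rcases le_or_gt R₀ s with hcase | hcase
  · rw [hharm s hcase]
  -- now 0 < s < R₀
  have hs0 : 0 < s := hs.1
  have hsR : s < R := lt_trans hcase hR₀R
  have hR0 : (0:ℝ) < R := lt_trans hs0 hsR
  have hR₀0 : (0:ℝ) < R₀ := lt_trans ha haR₀
  have hK : 0 < Real.log (R / s) := Real.log_pos (by rw [lt_div_iff₀ hs0]; linarith)
  set F := f₀ s with hF
  set B := (1 - F) / Real.log (R / s) with hBdef
  set A := F - B * Real.log s with hAdef
  set G := fun t : ℝ => f₀ t - (A + B * Real.log t) with hGdef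
  have hlogRs : Real.log (R / s) = Real.log R - Real.log s :=
    Real.log_div hR0.ne' hs0.ne'
  have hGs : G s = 0 := by simp [hGdef, hAdef, hF]
  have hGR : G R = 0 := by
    have hBK : B * Real.log (R / s) = 1 - F := div_mul_cancel₀ _ hK.ne'
    simp only [hGdef, hAdef, hbdry]
    rw [hlogRs] at hBK
    linarith
  have hGcont : ContinuousOn G (Set.Ioi 0) := by
    apply hcont.sub
    exact continuousOn_const.add (continuousOn_const.mul
      (Real.continuousOn_log.mono (fun x hx => ne_of_gt hx)))
  have hIccsub : Set.Icc s R ⊆ Set.Ioi (0:ℝ) := fun x hx => lt_of_lt_of_le hs0 hx.1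
  -- the maximum principle: G ≤ 0 on [s, R]
  have key : ∀ t ∈ Set.Icc s R, G t ≤ 0 := by
    by_contra hcon
    push_neg at hcon
    obtain ⟨t₀, ht₀mem, ht₀pos⟩ := hcon
    obtain ⟨r₀, hr₀mem, hr₀max⟩ := isCompact_Icc.exists_isMaxOn
      ⟨s, Set.left_mem_Icc.2 hsR.le⟩ (hGcont.mono hIccsub)
    set M := G r₀ with hMdef
    have hM : 0 < M := lt_of_lt_of_le ht₀pos (hr₀max ht₀mem)
    set T := Set.Icc s R ∩ G ⁻¹' {M} with hTdef
    have hTclosed : IsClosed T :=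
      (hGcont.mono hIccsub).preimage_isClosed_of_isClosed isClosed_Icc isClosed_singleton
    have hTne : T.Nonempty := ⟨r₀, hr₀mem, rfl⟩
    have hTbdd : BddBelow T := ⟨s, fun x hx => hx.1.1⟩
    set rstar := sInf T with hrstardef
    have hrstarT : rstar ∈ T := hTclosed.csInf_mem hTne hTbdd
    have hrstarIcc : rstar ∈ Set.Icc s R := hrstarT.1
    have hrstarM : G rstar = M := hrstarT.2
    have hsrstar : s < rstar := by
      rcases lt_or_eq_of_le hrstarIcc.1 with h | h
      · exact h
      · exfalso; rw [← h, hGs] at hrstarM; linarith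
    have hrstarR : rstar < R := by
      rcases lt_or_eq_of_le hrstarIcc.2 with h | h
      · exact h
      · exfalso; rw [h, hGR] at hrstarM; linarith
    set ρ := min (rstar - s) (R - rstar) / 2 with hρdef
    have hρ0 : 0 < ρ := by
      apply div_pos _ two_pos
      exact lt_min (by linarith) (by linarith)
    have hρ1 : ρ < rstar - s := by
      have := min_le_left (rstar - s) (R - rstar); linarith
    have hρ2 : rstar + ρ < R := by
      have := min_le_right (rstar - s) (R - rstar); linarith
    have hρrstar : ρ < rstar := by linarith
    set φ := fun θ : ℝ => ‖(rstar:ℂ) + ρ * Complex.exp (θ * Complex.I)‖ with hφdef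
    have hφbound : ∀ θ : ℝ, rstar - ρ ≤ φ θ ∧ φ θ ≤ rstar + ρ := by
      intro θ
      have he : ‖(ρ:ℂ) * Complex.exp (θ * Complex.I)‖ = ρ := by
        rw [norm_mul, Complex.norm_real, Complex.norm_exp_ofReal_mul_I,
          mul_one, Real.norm_eq_abs, abs_of_pos hρ0]
      constructor
      · have h1 := norm_add_le ((rstar:ℂ) + ρ * Complex.exp (θ * Complex.I))
          (-(ρ * Complex.exp (θ * Complex.I)))
        simp only [add_neg_cancel_right, norm_neg] at h1
        rw [he, Complex.norm_real, Real.norm_eq_abs, abs_of_pos (by linarith : (0:ℝ) < rstar)] at h1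
        linarith [h1]
      · have h1 := norm_add_le ((rstar:ℂ)) (ρ * Complex.exp (θ * Complex.I))
        rw [he, Complex.norm_real, Real.norm_eq_abs, abs_of_pos (by linarith : (0:ℝ) < rstar)] at h1
        linarith [h1]
    have hφpos : ∀ θ : ℝ, 0 < φ θ := fun θ => lt_of_lt_of_le (by linarith) (hφbound θ).1
    have hφIcc : ∀ θ : ℝ, φ θ ∈ Set.Icc s R := fun θ =>
      ⟨le_trans (by linarith) (hφbound θ).1, le_trans (hφbound θ).2 (by linarith)⟩
    have hφcont : Continuous φ := by
      apply continuous_norm.comp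
      exact continuous_const.add (continuous_const.mul
        ((Complex.continuous_ofReal.mul continuous_const).cexp))
    have hφpi : φ π = rstar - ρ := by
      simp only [hφdef]
      rw [show ((π:ℝ):ℂ) * Complex.I = (π:ℂ) * Complex.I by norm_num, Complex.exp_pi_mul_I]
      rw [show (rstar:ℂ) + ρ * (-1) = ((rstar - ρ : ℝ) : ℂ) by push_cast; ring]
      rw [Complex.norm_real, Real.norm_eq_abs, abs_of_pos (by linarith)]
    -- continuity of the integrands
    have hf₀φ : Continuous fun θ => f₀ (φ θ) :=
      hcont.comp_continuous hφcont fun θ => Set.mem_Ioi.2 (hφpos θ)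
    have hlogφ : Continuous fun θ => Real.log (φ θ) :=
      Real.continuousOn_log.comp_continuous hφcont fun θ => ne_of_gt (hφpos θ)
    have hGφ : Continuous fun θ => G (φ θ) := by
      simp only [hGdef]
      exact hf₀φ.sub (continuous_const.add (continuous_const.mul hlogφ))
    -- sub-mean value property for G at rstar
    have habs : ‖((rstar:ℂ))‖ = rstar := by
      rw [Complex.norm_real, Real.norm_eq_abs, abs_of_pos (by linarith)]
    have hzne : ((rstar:ℂ)) ≠ 0 := by
      simp only [ne_eq, Complex.ofReal_eq_zero]; linarith
    have hsubm := hsub ((rstar:ℂ)) hzne ρ hρ0 (by rw [habs]; exact hρrstar)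
    rw [habs] at hsubm
    have hlogmean := log_circle_mean rstar ρ hρ0 hρrstar
    have hGmean : G rstar ≤ (1 / (2 * π)) * ∫ θ in (0:ℝ)..(2*π), G (φ θ) := by
      have hsplit : ∫ θ in (0:ℝ)..(2*π), G (φ θ)
          = (∫ θ in (0:ℝ)..(2*π), f₀ (φ θ)) - (2 * π * A + B * (2 * π * Real.log rstar)) := by
        simp only [hGdef]
        rw [intervalIntegral.integral_sub (g := fun θ => A + B * Real.log (φ θ)) (hf₀φ.intervalIntegrable _ _)
          ((continuous_const.add (continuous_const.mul hlogφ) :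
            Continuous fun θ => A + B * Real.log (φ θ)).intervalIntegrable _ _)]
        rw [intervalIntegral.integral_add (g := fun θ => B * Real.log (φ θ)) (intervalIntegrable_const)
          ((continuous_const.mul hlogφ :
            Continuous fun θ => B * Real.log (φ θ)).intervalIntegrable _ _)]
        rw [intervalIntegral.integral_const, intervalIntegral.integral_const_mul]
        rw [show (∫ θ in (0:ℝ)..(2*π), Real.log (φ θ)) = 2 * π * Real.log rstar from hlogmean]
        simp only [smul_eq_mul]
        ring
      rw [hsplit]
      have hπ : (0:ℝ) < 2 * π := by positivity
      simp only [hGdef]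
      rw [mul_sub]
      have h2 : (1 / (2 * π)) * (2 * π * A + B * (2 * π * Real.log rstar))
          = A + B * Real.log rstar := by field_simp
      rw [h2]
      linarith [hsubm]
    -- strictness
    have hrmρIcc : rstar - ρ ∈ Set.Icc s R := ⟨by linarith, by linarith⟩
    have hlemax : G (rstar - ρ) ≤ M := hr₀max hrmρIcc
    rcases eq_or_lt_of_le hlemax with heq | hlt
    · -- rstar - ρ is also a maximizer, contradicting minimality of rstar
      have : rstar - ρ ∈ T := ⟨hrmρIcc, heq⟩
      have := csInf_le hTbdd this
      linarith
    · have hstrict : (∫ θ in (0:ℝ)..(2*π), G (φ θ)) < ∫ θ in (0:ℝ)..(2*π), (fun _ => M) θ := by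
        apply intervalIntegral.integral_lt_integral_of_continuousOn_of_le_of_exists_lt
          (by positivity) hGφ.continuousOn continuousOn_const
        · intro x _
          exact hr₀max (hφIcc x)
        · refine ⟨π, ⟨Real.pi_pos.le, by linarith [Real.pi_pos]⟩, ?_⟩
          rw [hφpi]; exact hlt
      rw [intervalIntegral.integral_const, smul_eq_mul] at hstrict
      have hπ : (0:ℝ) < 2 * π := by positivity
      have : G rstar < M := by
        calc G rstar ≤ (1 / (2 * π)) * ∫ θ in (0:ℝ)..(2*π), G (φ θ) := hGmean
        _ < (1 / (2 * π)) * ((2 * π) * M) := by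
            apply mul_lt_mul_of_pos_left _ (by positivity)
            rw [sub_zero] at hstrict; exact hstrict
        _ = M := by field_simp
      rw [hrstarM] at this
      linarith
  -- conclude via the value at R₀
  have hGR₀ := key R₀ ⟨hcase.le, hR₀R.le⟩
  have hfR₀ : f₀ R₀ = Real.log (R₀ / a) / Real.log (R / a) := hharm R₀ le_rfl
  set la := Real.log a
  set ls := Real.log s
  set l0 := Real.log R₀
  set lr := Real.log R
  have hlog1 : Real.log (R₀ / a) = l0 - la := Real.log_div hR₀0.ne' ha.ne'
  have hlog2 : Real.log (R / a) = lr - la := Real.log_div hR0.ne' ha.ne'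
  have hlog3 : Real.log (s / a) = ls - la := Real.log_div hs0.ne' ha.ne'
  have hla : 0 < lr - la := by rw [← hlog2]; exact Real.log_pos (by rw [lt_div_iff₀ ha]; linarith)
  have hls : 0 < lr - ls := by rw [← hlogRs]; exact hK
  have hl0 : 0 < lr - l0 := by
    rw [show lr - l0 = Real.log (R / R₀) from (Real.log_div hR0.ne' hR₀0.ne').symm]
    exact Real.log_pos (by rw [lt_div_iff₀ hR₀0]; linarith)
  have hsl0 : 0 < l0 - ls := by
    rw [show l0 - ls = Real.log (R₀ / s) from (Real.log_div hR₀0.ne' hs0.ne').symm]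
    exact Real.log_pos (by rw [lt_div_iff₀ hs0]; linarith)
  rw [hlog3, hlog2, div_le_iff₀ hla]
  -- rewrite the inequality at R₀
  have hineq : (l0 - la) / (lr - la) ≤ F + B * (l0 - ls) := by
    have := hGR₀
    simp only [hGdef, hAdef] at this
    rw [hfR₀, hlog1, hlog2] at this
    linarith
  have hBK : B * (lr - ls) = 1 - F := by
    rw [hBdef, hlogRs]; field_simp
  rw [div_le_iff₀ hla] at hineq
  have h2 : (l0 - la) * (lr - ls) ≤ (F * (lr - la)) * (lr - ls) + (1 - F) * ((l0 - ls) * (lr - la)) := by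
    have h' := mul_le_mul_of_nonneg_right hineq hls.le
    have hBK2 : B * (lr - ls) * ((l0 - ls) * (lr - la)) = (1 - F) * ((l0 - ls) * (lr - la)) := by
      rw [hBK]
    linarith [h', hBK2]
  have h3 : (lr - l0) * (ls - la) ≤ (lr - l0) * (F * (lr - la)) := by linarith [h2]
  have := (mul_le_mul_iff_of_pos_left hl0).mp h3
  linarith
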